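/- Every function computable by a core-language command (i.e., every function f : ℕ^n → ℕ such that for each x, f(x) is the maximum value of some fixed output coordinate over all y with x ⟦C⟧ y) is primitive recursive. -/

import Mathlib

/-- Expressions of the core language `L_r`. -/
inductive Expr (n : ℕ) where
  | zero : Expr n
  | var (i : Fin n) : Expr n
  | add (i j : Fin n) : Expr n
  | mul (i j : Fin n) : Expr n

/-- Commands of the core language `L_r`. -/
inductive Cmd (n : ℕ) where
  | skip : Cmd n
  | assign (l : Fin n) (e : Expr n) : Cmd n
  | seq (c₁ c₂ : Cmd n) : Cmd n
  | choose (c₁ c₂ : Cmd n) : Cmd n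
  | loop (l : Fin n) (c : Cmd n) : Cmd n

def Expr.eval {n : ℕ} : Expr n → (Fin n → ℕ) → ℕ
  | .zero, _ => 0
  | .var i, x => x i
  | .add i j, x => x i + x j
  | .mul i j, x => x i * x j

/-- `i`-fold iteration of a relation (`iterRel R 0` is the identity). -/
def iterRel {α : Type*} (R : α → α → Prop) : ℕ → α → α → Prop
  | 0, x, y => y = x
  | k + 1, x, z => ∃ y, R x y ∧ iterRel R k y z

/-- The (nondeterministic, exact-assignment) semantics `⟦C⟧ ⊆ ℕⁿ × ℕⁿ`. -/
def Sem {n : ℕ} : Cmd n → (Fin n → ℕ) → (Fin n → ℕ) → Prop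
  | .skip, x, y => y = x
  | .assign l e, x, y => y = Function.update x l (e.eval x)
  | .seq c₁ c₂, x, y => ∃ z, Sem c₁ x z ∧ Sem c₂ z y
  | .choose c₁ c₂, x, y => Sem c₁ x y ∨ Sem c₂ x y
  | .loop l c, x, y => ∃ i ≤ x l, iterRel (Sem c) i x y

section Aux

open List (Vector)

variable {n : ℕ}

/-- List of all states reachable by running `C` from `v`. -/
def run : Cmd n → List.Vector ℕ n → List (List.Vector ℕ n)
  | .skip, v => [v]
  | .assign l e, v => [List.Vector.ofFn (Function.update v.get l (Expr.eval e v.get))]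
  | .seq c₁ c₂, v => (run c₁ v).flatMap (run c₂)
  | .choose c₁ c₂, v => run c₁ v ++ run c₂ v
  | .loop l c, v =>
      Nat.rec [v] (fun _ ih => v :: ih.flatMap (run c)) (v.get l)

lemma iterRel_succ' {α : Type*} (R : α → α → Prop) (k : ℕ) (x z : α) :
    iterRel R (k + 1) x z ↔ ∃ y, iterRel R k x y ∧ R y z := by
  induction k generalizing x with
  | zero =>
    constructor
    · rintro ⟨y, hy, h⟩; exact ⟨x, rfl, h ▸ hy⟩
    · rintro ⟨y, hy, h⟩; subst hy; exact ⟨z, h, rfl⟩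
  | succ k ih =>
    constructor
    · rintro ⟨y, hy, h⟩
      obtain ⟨w, hw, hwz⟩ := (ih y).1 h
      exact ⟨w, ⟨y, hy, hw⟩, hwz⟩
    · rintro ⟨y, ⟨u, hu, huy⟩, h⟩
      exact ⟨u, hu, (ih u).2 ⟨y, huy, h⟩⟩

lemma run_sound : ∀ (C : Cmd n) (v w : List.Vector ℕ n), w ∈ run C v → Sem C v.get w.get := by
  intro C
  induction C with
  | skip =>
    intro v w hw
    simp only [run, List.mem_singleton] at hw
    subst hw; rfl
  | assign l e =>
    intro v w hw
    simp only [run, List.mem_singleton] at hw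
    subst hw
    show _ = _
    funext i
    simp [List.Vector.get_ofFn]
  | seq c₁ c₂ ih₁ ih₂ =>
    intro v w hw
    simp only [run, List.mem_flatMap] at hw
    obtain ⟨z, hz, hw⟩ := hw
    exact ⟨z.get, ih₁ v z hz, ih₂ z w hw⟩
  | choose c₁ c₂ ih₁ ih₂ =>
    intro v w hw
    simp only [run, List.mem_append] at hw
    cases hw with
    | inl h => exact Or.inl (ih₁ v w h)
    | inr h => exact Or.inr (ih₂ v w h)
  | loop l c ih =>
    intro v w hw
    suffices H : ∀ (k : ℕ) (w : List.Vector ℕ n),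
        w ∈ (Nat.rec [v] (fun _ ih => v :: ih.flatMap (run c)) k : List (List.Vector ℕ n)) →
        ∃ i ≤ k, iterRel (Sem c) i v.get w.get by
      obtain ⟨i, hik, hit⟩ := H (v.get l) w hw
      exact ⟨i, hik, hit⟩
    intro k
    induction k with
    | zero =>
      intro w hw
      have hw' : w = v := List.mem_singleton.1 hw
      exact ⟨0, Nat.le_refl 0, by simp [iterRel, hw']⟩
    | succ k ihk =>
      intro w hw
      rcases List.mem_cons.1 hw with h | h
      · exact ⟨0, Nat.zero_le _, by simp [iterRel, h]⟩
      · obtain ⟨u, hu, hwu⟩ := List.mem_flatMap.1 h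
        obtain ⟨i, hik, hit⟩ := ihk u hu
        exact ⟨i + 1, Nat.succ_le_succ hik,
          (iterRel_succ' _ _ _ _).2 ⟨u.get, hit, ih u w hwu⟩⟩

lemma run_complete : ∀ (C : Cmd n) (v : List.Vector ℕ n) (y : Fin n → ℕ),
    Sem C v.get y → ∃ w ∈ run C v, w.get = y := by
  intro C
  induction C with
  | skip =>
    intro v y hy
    exact ⟨v, by simp [run], hy.symm⟩
  | assign l e =>
    intro v y hy
    have hy' : y = Function.update v.get l (Expr.eval e v.get) := hy
    refine ⟨List.Vector.ofFn (Function.update v.get l (Expr.eval e v.get)), by simp [run], ?_⟩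
    funext i
    rw [List.Vector.get_ofFn, hy']
  | seq c₁ c₂ ih₁ ih₂ =>
    intro v y hy
    obtain ⟨z, hz, hy⟩ := hy
    obtain ⟨w₁, hw₁, hw₁e⟩ := ih₁ v z hz
    obtain ⟨w₂, hw₂, hw₂e⟩ := ih₂ w₁ y (hw₁e ▸ hy)
    exact ⟨w₂, by simp only [run, List.mem_flatMap]; exact ⟨w₁, hw₁, hw₂⟩, hw₂e⟩
  | choose c₁ c₂ ih₁ ih₂ =>
    intro v y hy
    cases hy with
    | inl h =>
      obtain ⟨w, hw, hwe⟩ := ih₁ v y h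
      exact ⟨w, by simp only [run, List.mem_append]; exact Or.inl hw, hwe⟩
    | inr h =>
      obtain ⟨w, hw, hwe⟩ := ih₂ v y h
      exact ⟨w, by simp only [run, List.mem_append]; exact Or.inr hw, hwe⟩
  | loop l c ih =>
    intro v y hy
    obtain ⟨i, hil, hit⟩ := hy
    suffices H : ∀ (k i : ℕ), i ≤ k → ∀ (y : Fin n → ℕ), iterRel (Sem c) i v.get y →
        ∃ w ∈ (Nat.rec [v] (fun _ ih => v :: ih.flatMap (run c)) k : List (List.Vector ℕ n)),
          w.get = y from H (v.get l) i hil y hit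
    intro k
    induction k with
    | zero =>
      intro i hi y hy
      interval_cases i
      exact ⟨v, List.mem_singleton.2 rfl, hy.symm⟩
    | succ k ihk =>
      intro i hi y hy
      cases i with
      | zero => exact ⟨v, List.mem_cons_self, hy.symm⟩
      | succ m =>
        obtain ⟨z, hz, hzy⟩ := (iterRel_succ' _ _ _ _).1 hy
        obtain ⟨u, hu, hue⟩ := ihk m (Nat.le_of_succ_le_succ hi) z hz
        obtain ⟨w, hw, hwe⟩ := ih u y (hue ▸ hzy)
        exact ⟨w, List.mem_cons.2 (Or.inr (List.mem_flatMap.2 ⟨u, hu, hw⟩)), hwe⟩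

lemma run_nonempty : ∀ (C : Cmd n) (v : List.Vector ℕ n), ∃ w, w ∈ run C v := by
  intro C
  induction C with
  | skip => intro v; exact ⟨v, by simp [run]⟩
  | assign l e =>
    intro v
    exact ⟨List.Vector.ofFn (Function.update v.get l (Expr.eval e v.get)), List.mem_singleton.2 rfl⟩
  | seq c₁ c₂ ih₁ ih₂ =>
    intro v
    obtain ⟨w₁, hw₁⟩ := ih₁ v
    obtain ⟨w₂, hw₂⟩ := ih₂ w₁
    exact ⟨w₂, by simp only [run, List.mem_flatMap]; exact ⟨w₁, hw₁, hw₂⟩⟩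
  | choose c₁ c₂ ih₁ ih₂ =>
    intro v
    obtain ⟨w, hw⟩ := ih₁ v
    exact ⟨w, by simp only [run, List.mem_append]; exact Or.inl hw⟩
  | loop l c ih =>
    intro v
    refine ⟨v, ?_⟩
    show v ∈ (Nat.rec [v] (fun _ ih => v :: ih.flatMap (run c)) (v.get l) : List (List.Vector ℕ n))
    cases v.get l with
    | zero => simp
    | succ k => exact List.mem_cons_self

lemma foldr_max_mem : ∀ (l : List ℕ), l ≠ [] → l.foldr max 0 ∈ l := by
  intro l
  induction l with
  | nil => intro h; exact absurd rfl h
  | cons a t ih =>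
    intro _
    rcases eq_or_ne t [] with h | h
    · subst h; simp
    · rcases max_choice a (t.foldr max 0) with h' | h'
      · simp [List.foldr_cons, h']
      · simp only [List.foldr_cons, h']
        exact List.mem_cons_of_mem _ (ih h)

lemma le_foldr_max : ∀ (l : List ℕ) (a : ℕ), a ∈ l → a ≤ l.foldr max 0 := by
  intro l
  induction l with
  | nil => intro a h; simp at h
  | cons b t ih =>
    intro a h
    rcases List.mem_cons.1 h with h | h
    · subst h; exact le_max_left _ _
    · exact le_trans (ih a h) (le_max_right _ _)

lemma expr_eval_primrec (e : Expr n) : Primrec fun v : List.Vector ℕ n => Expr.eval e v.get := by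
  cases e with
  | zero => exact Primrec.const 0
  | var i => exact Primrec.vector_get.comp .id (.const i)
  | add i j =>
    exact Primrec.nat_add.comp (Primrec.vector_get.comp .id (.const i))
      (Primrec.vector_get.comp .id (.const j))
  | mul i j =>
    exact Primrec.nat_mul.comp (Primrec.vector_get.comp .id (.const i))
      (Primrec.vector_get.comp .id (.const j))

lemma run_primrec : ∀ C : Cmd n, Primrec (run C) := by
  intro C
  induction C with
  | skip => exact Primrec.list_cons.comp .id (.const [])
  | assign l e =>
    refine Primrec.list_cons.comp ?_ (.const [])
    refine Primrec.vector_ofFn fun i => ?_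
    by_cases h : i = l
    · subst h
      have : (fun v : List.Vector ℕ n => Function.update v.get i (Expr.eval e v.get) i)
          = fun v : List.Vector ℕ n => Expr.eval e v.get := by
        funext v; simp
      rw [this]; exact expr_eval_primrec e
    · have : (fun v : List.Vector ℕ n => Function.update v.get l (Expr.eval e v.get) i)
          = fun v : List.Vector ℕ n => v.get i := by
        funext v; simp [Function.update_of_ne h]
      rw [this]; exact Primrec.vector_get.comp .id (.const i)
  | seq c₁ c₂ ih₁ ih₂ =>
    exact Primrec.list_flatMap ih₁ (ih₂.comp Primrec.snd).to₂
  | choose c₁ c₂ ih₁ ih₂ =>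
    exact Primrec.list_append.comp ih₁ ih₂
  | loop l c ih =>
    refine Primrec.nat_rec' (Primrec.vector_get.comp .id (.const l))
      (Primrec.list_cons.comp .id (.const []))
      (h := fun v p => v :: p.2.flatMap (run c)) ?_
    exact (Primrec.list_cons.comp Primrec.fst
      (Primrec.list_flatMap (Primrec.snd.comp Primrec.snd)
        ((ih.comp Primrec.snd).to₂))).to₂

/-- every function computable by a core-language command — i.e.
mapping an input store to the maximum value of a fixed output coordinate
over all reachable output stores — is primitive recursive. -/
theorem core_computable_primrec {n : ℕ} (C : Cmd n) (j : Fin n)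
    (f : (Fin n → ℕ) → ℕ)
    (hf : ∀ x : Fin n → ℕ, IsGreatest {m : ℕ | ∃ y, Sem C x y ∧ y j = m} (f x)) :
    Nat.Primrec' (fun v : List.Vector ℕ n => f v.get) := by
  have key : ∀ v : List.Vector ℕ n, f v.get = ((run C v).map (fun w => w.get j)).foldr max 0 := by
    intro v
    set g : ℕ := ((run C v).map (fun w => w.get j)).foldr max 0 with hg
    obtain ⟨hmem, hub⟩ := hf v.get
    -- g ∈ the set
    obtain ⟨w₀, hw₀⟩ := run_nonempty C v
    have hne : (run C v).map (fun w => w.get j) ≠ [] := by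
      intro h
      rw [List.map_eq_nil_iff.1 h] at hw₀
      exact List.not_mem_nil hw₀
    have hgmem := foldr_max_mem _ hne
    rw [← hg] at hgmem
    obtain ⟨w, hw, hwj⟩ := List.mem_map.1 hgmem
    have h1 : g ≤ f v.get := hub ⟨w.get, run_sound C v w hw, hwj⟩
    -- f v.get ≤ g
    obtain ⟨y, hy, hyj⟩ := hmem
    obtain ⟨w', hw', hw'e⟩ := run_complete C v y hy
    have h2 : f v.get ≤ g := by
      rw [hg]
      refine le_foldr_max _ _ ?_
      exact List.mem_map.2 ⟨w', hw', by rw [hw'e, hyj]⟩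
    exact le_antisymm h2 h1
  have hprim : Primrec fun v : List.Vector ℕ n =>
      ((run C v).map (fun w => w.get j)).foldr max 0 := by
    have hmap : Primrec fun v : List.Vector ℕ n => (run C v).map (fun w => w.get j) :=
      Primrec.list_map (run_primrec C)
        ((Primrec.vector_get.comp Primrec.snd (Primrec.const j)).to₂)
    exact (Primrec.list_foldr hmap (Primrec.const 0)
      ((Primrec.nat_max.comp (Primrec.fst.comp Primrec.snd)
        (Primrec.snd.comp Primrec.snd)).to₂) : Primrec _)
  have : (fun v : List.Vector ℕ n => f v.get)
      = fun v : List.Vector ℕ n => ((run C v).map (fun w => w.get j)).foldr max 0 :=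
    funext key
  rw [this]
  exact Nat.Primrec'.of_prim hprim
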